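/- arXiv:2602.04123 — 6 statements merged into one kernel-verified Lean document; each statement's English description precedes it below -/
import Mathlib

section
/- Let F = {x ∈ ℝ^d : h_l(x) ≤ d_l for all l ∈ H} be a nonempty compact convex set, where each h_l is a closed convex function and H is a finite index set. Then for any r ≥ 0, r ⊙ F = {X ∈ ℝ^d : H_l(X, r) ≤ r·d_l for all l ∈ H}, where H_l is the perspective function of h_l. -/
/-- `r ⊙ F`: the dilation of a set. -/
noncomputable def dil {V : Type*} [Zero V] [SMul ℝ V] (r : ℝ) (F : Set V) : Set V :=
  if r = 0 then {0} else (fun x => r • x) '' F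

/-- The perspective function of a real-valued (everywhere finite) closed convex
function `h` on `ℝ^d`: `H(x,t) = t·h(x/t)` for `t > 0`, `0` at `(0,0)`, and `+∞`
otherwise. -/
noncomputable def persp {d : ℕ} (h : (Fin d → ℝ) → ℝ) (x : Fin d → ℝ) (t : ℝ) : EReal :=
  if 0 < t then ((t * h (t⁻¹ • x) : ℝ) : EReal)
  else if t = 0 ∧ x = 0 then (0 : EReal) else ⊤

theorem stmt_3 {d : ℕ} {ι : Type*} [Fintype ι]
    (h : ι → (Fin d → ℝ) → ℝ) (dl : ι → ℝ)
    (hconv : ∀ l, ConvexOn ℝ Set.univ (h l))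
    (hcont : ∀ l, Continuous (h l))
    (F : Set (Fin d → ℝ))
    (hFdef : F = {x | ∀ l, h l x ≤ dl l})
    (hFne : F.Nonempty) (hFc : IsCompact F)
    (r : ℝ) (hr : 0 ≤ r) :
    dil r F = {X | ∀ l, persp (h l) X r ≤ ((r * dl l : ℝ) : EReal)} := by
  ext X
  rcases hr.lt_or_eq with hr' | hr'
  · -- r > 0
    simp only [dil, if_neg (ne_of_gt hr'), Set.mem_image, Set.mem_setOf_eq, persp,
      if_pos hr', hFdef]
    constructor
    · rintro ⟨x, hx, rfl⟩ l
      rw [smul_smul, inv_mul_cancel₀ (ne_of_gt hr'), one_smul]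
      exact_mod_cast mul_le_mul_of_nonneg_left (hx l) hr'.le
    · intro hX
      refine ⟨r⁻¹ • X, fun l => ?_, ?_⟩
      · have := hX l
        rw [EReal.coe_le_coe_iff] at this
        exact le_of_mul_le_mul_left this hr'
      · rw [smul_smul, mul_inv_cancel₀ (ne_of_gt hr'), one_smul]
  · -- r = 0
    subst hr'
    simp only [dil, if_pos rfl, if_true, true_and, Set.mem_singleton_iff, Set.mem_setOf_eq,
      persp, lt_irrefl, if_false, zero_mul, EReal.coe_zero]
    constructor
    · rintro rfl l
      simp
    · intro hX
      by_contra hX0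
      rcases isEmpty_or_nonempty ι with he | hne
      · -- ι empty: F = univ, compact, contradiction with X ≠ 0
        have hFu : F = Set.univ := by
          rw [hFdef]; ext x; simp
        rw [hFu] at hFc
        obtain ⟨C, hC⟩ := (isBounded_iff_forall_norm_le).mp hFc.isBounded
        have hXn : (0:ℝ) < ‖X‖ := norm_pos_iff.mpr hX0
        have hC0 : (0:ℝ) ≤ C := le_trans (norm_nonneg X) (hC X (Set.mem_univ _))
        have hc : (0:ℝ) ≤ (C+1)/‖X‖ := by positivity
        have := hC (((C+1)/‖X‖) • X) (Set.mem_univ _)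
        rw [norm_smul, Real.norm_eq_abs, abs_of_nonneg hc,
          div_mul_cancel₀ _ hXn.ne'] at this
        linarith
      · obtain ⟨l⟩ := hne
        have := hX l
        rw [if_neg hX0] at this
        simp at this
end

section
/- Let Λ, Γ ⊆ ℝ^d be nonempty compact convex sets with 0 ∈ Γ, and let r be a positive integer. Then the union over integers y with 0 ≤ y ≤ r of the sets (y ⊙ Λ) + ((r − y) ⊙ Γ) has convex hull equal to the union over real t ∈ [0, r] of (t ⊙ Λ) + ((r − t) ⊙ Γ). -/
open scoped Pointwise

lemma dil_eq_smul {V : Type*} [AddCommGroup V] [Module ℝ V] (r : ℝ) {F : Set V}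
    (hF : F.Nonempty) : dil r F = r • F := by
  unfold dil
  split_ifs with h
  · subst h
    rw [Set.zero_smul_set hF]
    rfl
  · rfl

lemma combo_mem {V : Type*} [AddCommGroup V] [Module ℝ V] {Λ : Set V}
    (hΛconv : Convex ℝ Λ) (hΛne : Λ.Nonempty) {a b c c' : ℝ}
    (ha : 0 ≤ a) (hb : 0 ≤ b) (hc : 0 ≤ c) (hc' : 0 ≤ c')
    {u u' : V} (hu : u ∈ Λ) (hu' : u' ∈ Λ) :
    ∃ w ∈ Λ, a • c • u + b • c' • u' = (a * c + b * c') • w := by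
  by_cases hs : a * c + b * c' = 0
  · have h1 : a * c = 0 := by nlinarith [mul_nonneg ha hc, mul_nonneg hb hc']
    have h2 : b * c' = 0 := by nlinarith [mul_nonneg ha hc, mul_nonneg hb hc']
    obtain ⟨w, hw⟩ := hΛne
    exact ⟨w, hw, by rw [hs, zero_smul, smul_smul, smul_smul, h1, h2, zero_smul,
      zero_smul, add_zero]⟩
  · set s := a * c + b * c' with hsdef
    have hspos : 0 < s := lt_of_le_of_ne (by positivity) (Ne.symm hs)
    refine ⟨(a * c / s) • u + (b * c' / s) • u', hΛconv hu hu'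
      (by positivity) (by positivity) (by field_simp; exact hsdef.symm), ?_⟩
    rw [smul_add, smul_smul, smul_smul, smul_smul, smul_smul]
    rw [mul_div_cancel₀ _ hs, mul_div_cancel₀ _ hs]

theorem stmt_8 {d : ℕ} (Λ Γ : Set (Fin d → ℝ))
    (hΛne : Λ.Nonempty) (hΛc : IsCompact Λ) (hΛconv : Convex ℝ Λ)
    (hΓne : Γ.Nonempty) (hΓc : IsCompact Γ) (hΓconv : Convex ℝ Γ)
    (hΓ0 : (0 : Fin d → ℝ) ∈ Γ) (r : ℕ) (hr : 0 < r) :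
    convexHull ℝ (⋃ y ∈ Finset.range (r + 1),
        dil (y : ℝ) Λ + dil ((r : ℝ) - y) Γ) =
      ⋃ t ∈ Set.Icc (0 : ℝ) (r : ℝ), dil t Λ + dil ((r : ℝ) - t) Γ := by
  simp only [dil_eq_smul _ hΛne, dil_eq_smul _ hΓne]
  set T : Set (Fin d → ℝ) := ⋃ t ∈ Set.Icc (0 : ℝ) (r : ℝ),
      t • Λ + ((r : ℝ) - t) • Γ with hT
  -- T is convex
  have hTconv : Convex ℝ T := by
    intro x hx x' hx' a b ha hb hab
    simp only [hT, Set.mem_iUnion₂] at hx hx' ⊢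
    obtain ⟨t, ht, hxt⟩ := hx
    obtain ⟨t', ht', hxt'⟩ := hx'
    obtain ⟨p, hp, q, hq, hpq⟩ := hxt
    obtain ⟨p', hp', q', hq', hpq'⟩ := hxt'
    obtain ⟨u, hu, hup⟩ := hp
    obtain ⟨v, hv, hvq⟩ := hq
    obtain ⟨u', hu', hup'⟩ := hp'
    obtain ⟨v', hv', hvq'⟩ := hq'
    obtain ⟨w, hw, hweq⟩ := combo_mem hΛconv hΛne ha hb ht.1 ht'.1 hu hu'
    obtain ⟨z, hz, hzeq⟩ := combo_mem hΓconv hΓne ha hb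
      (by linarith [ht.2] : (0:ℝ) ≤ (r : ℝ) - t)
      (by linarith [ht'.2] : (0:ℝ) ≤ (r : ℝ) - t') hv hv'
    refine ⟨a * t + b * t', ⟨add_nonneg (mul_nonneg ha ht.1) (mul_nonneg hb ht'.1), ?_⟩, ?_⟩
    · nlinarith [ht.2, ht'.2]
    · refine ⟨(a * t + b * t') • w, Set.smul_mem_smul_set hw,
        ((r : ℝ) - (a * t + b * t')) • z, Set.smul_mem_smul_set hz, ?_⟩
      have hcoef : (r : ℝ) - (a * t + b * t') = a * ((r:ℝ) - t) + b * ((r:ℝ) - t') := by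
        have : a + b = 1 := hab
        ring_nf
        nlinarith [this]
      rw [hcoef, ← hweq, ← hzeq, ← hpq, ← hpq', ← hup, ← hvq, ← hup', ← hvq']
      module
  apply le_antisymm
  · apply convexHull_min _ hTconv
    intro x hx
    simp only [Set.mem_iUnion₂, Finset.mem_range] at hx
    obtain ⟨y, hy, hxy⟩ := hx
    simp only [hT, Set.mem_iUnion₂]
    exact ⟨y, ⟨Nat.cast_nonneg y, by exact_mod_cast Nat.lt_succ_iff.mp hy⟩, hxy⟩
  · intro x hx
    simp only [hT, Set.mem_iUnion₂] at hx
    obtain ⟨t, ht, hxt⟩ := hx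
    obtain ⟨p, hp, q, hq, hpq⟩ := hxt
    obtain ⟨u, hu, hup⟩ := hp
    obtain ⟨v, hv, hvq⟩ := hq
    -- choose n
    set n : ℕ := min ⌊t⌋.toNat (r - 1) with hn
    have hnr : n ≤ r - 1 := min_le_right _ _
    have hnr' : n + 1 ≤ r := by omega
    have hnle : (n : ℝ) ≤ t := by
      have h1 : (⌊t⌋.toNat : ℝ) ≤ t := by
        rw [← Int.cast_natCast, Int.toNat_of_nonneg (Int.floor_nonneg.mpr ht.1)]
        exact Int.floor_le t
      calc (n : ℝ) ≤ (⌊t⌋.toNat : ℝ) := by exact_mod_cast min_le_left _ _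
        _ ≤ t := h1
    have htle : t ≤ (n : ℝ) + 1 := by
      rcases le_or_gt ⌊t⌋.toNat (r - 1) with h | h
      · have : n = ⌊t⌋.toNat := min_eq_left h
        rw [this, ← Int.cast_natCast, Int.toNat_of_nonneg (Int.floor_nonneg.mpr ht.1)]
        exact (Int.lt_floor_add_one t).le
      · have hne : n = r - 1 := min_eq_right h.le
        have : t ≤ (r : ℝ) := ht.2
        rw [hne]
        have : ((r - 1 : ℕ) : ℝ) + 1 = (r : ℝ) := by
          have := Nat.succ_pred_eq_of_pos hr
          push_cast [Nat.cast_sub hr]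
          ring
        linarith [ht.2]
    set a : ℝ := (n : ℝ) + 1 - t with hadef
    set b : ℝ := t - (n : ℝ) with hbdef
    have ha : 0 ≤ a := by simp [hadef]; linarith
    have hb : 0 ≤ b := by simp [hbdef]; linarith
    have hab : a + b = 1 := by rw [hadef, hbdef]; ring
    have hmem1 : (n : ℝ) • u + ((r : ℝ) - n) • v ∈
        (⋃ y ∈ Finset.range (r + 1), (y : ℝ) • Λ + ((r : ℝ) - y) • Γ) := by
      simp only [Set.mem_iUnion₂, Finset.mem_range]
      exact ⟨n, by omega, ⟨_, Set.smul_mem_smul_set hu, _, Set.smul_mem_smul_set hv, rfl⟩⟩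
    have hmem2 : ((n : ℝ) + 1) • u + ((r : ℝ) - (n + 1)) • v ∈
        (⋃ y ∈ Finset.range (r + 1), (y : ℝ) • Λ + ((r : ℝ) - y) • Γ) := by
      simp only [Set.mem_iUnion₂, Finset.mem_range]
      refine ⟨n + 1, by omega, ⟨_, Set.smul_mem_smul_set hu, _,
        Set.smul_mem_smul_set hv, ?_⟩⟩
      push_cast
      ring_nf
    have hx1 := subset_convexHull ℝ _ hmem1
    have hx2 := subset_convexHull ℝ _ hmem2
    have := (convex_convexHull ℝ _) hx1 hx2 ha hb hab
    convert this using 1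
    rw [← hpq, ← hup, ← hvq]
    simp only [hadef, hbdef]
    module
end

section
/- Let Λ ⊆ ℝ^d be a nonempty compact convex set and r a positive integer. Consider the mixed-integer set S = {(x, y) ∈ ℝ^d × ℤ : 0 ≤ y ≤ r, x ∈ y ⊙ Λ}. Then conv(S) = {(x, y) ∈ ℝ^d × ℝ : 0 ≤ y ≤ r, x ∈ y ⊙ Λ}, where y ⊙ Λ := {y·z : z ∈ Λ} for y > 0 and {0} for y = 0. -/
theorem stmt_9 {d : ℕ} (Λ : Set (Fin d → ℝ))
    (hΛne : Λ.Nonempty) (hΛc : IsCompact Λ) (hΛconv : Convex ℝ Λ)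
    (r : ℕ) (hr : 0 < r) :
    convexHull ℝ {p : (Fin d → ℝ) × ℝ |
        ∃ y : ℤ, 0 ≤ y ∧ y ≤ (r : ℤ) ∧ p.2 = (y : ℝ) ∧ p.1 ∈ dil (y : ℝ) Λ} =
      {p : (Fin d → ℝ) × ℝ | 0 ≤ p.2 ∧ p.2 ≤ (r : ℝ) ∧ p.1 ∈ dil p.2 Λ} := by
  set S := {p : (Fin d → ℝ) × ℝ |
      ∃ y : ℤ, 0 ≤ y ∧ y ≤ (r : ℤ) ∧ p.2 = (y : ℝ) ∧ p.1 ∈ dil (y : ℝ) Λ} with hS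
  set T := {p : (Fin d → ℝ) × ℝ | 0 ≤ p.2 ∧ p.2 ≤ (r : ℝ) ∧ p.1 ∈ dil p.2 Λ} with hT
  have hdil : ∀ (t : ℝ) (x : Fin d → ℝ), x ∈ dil t Λ ↔ ∃ z ∈ Λ, x = t • z := by
    intro t x
    unfold dil
    split_ifs with h
    · subst h
      simp only [Set.mem_singleton_iff]
      constructor
      · rintro rfl; obtain ⟨z, hz⟩ := hΛne; exact ⟨z, hz, by simp⟩
      · rintro ⟨z, hz, rfl⟩; simp
    · constructor
      · rintro ⟨z, hz, rfl⟩; exact ⟨z, hz, rfl⟩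
      · rintro ⟨z, hz, rfl⟩; exact ⟨z, hz, rfl⟩
  have hTconv : Convex ℝ T := by
    rintro p hp q hq a b ha hb hab
    obtain ⟨hp0, hpr, hpd⟩ := hp
    obtain ⟨hq0, hqr, hqd⟩ := hq
    obtain ⟨zp, hzp, hxp⟩ := (hdil _ _).1 hpd
    obtain ⟨zq, hzq, hxq⟩ := (hdil _ _).1 hqd
    have h2 : (a • p + b • q).2 = a * p.2 + b * q.2 := rfl
    have h1 : (a • p + b • q).1 = a • p.1 + b • q.1 := rfl
    have hy0 : 0 ≤ a * p.2 + b * q.2 := by positivity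
    refine ⟨by rw [h2]; exact hy0, ?_, ?_⟩
    · rw [h2]
      calc a * p.2 + b * q.2 ≤ a * r + b * r := by
            gcongr
          _ = r := by rw [← add_mul, hab, one_mul]
    · rw [hdil, h1, h2, hxp, hxq]
      set y := a * p.2 + b * q.2 with hy
      rcases eq_or_lt_of_le hy0 with hzero | hpos
      · obtain ⟨z, hz⟩ := hΛne
        refine ⟨z, hz, ?_⟩
        have ha1 : a * p.2 = 0 := by nlinarith [mul_nonneg ha hp0, mul_nonneg hb hq0]
        have hb1 : b * q.2 = 0 := by nlinarith [mul_nonneg ha hp0, mul_nonneg hb hq0]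
        rw [← hzero, smul_smul, smul_smul, ha1, hb1]
        simp
      · refine ⟨(a * p.2 / y) • zp + (b * q.2 / y) • zq, ?_, ?_⟩
        · apply hΛconv hzp hzq (by positivity) (by positivity)
          field_simp
          exact hy.symm
        · rw [smul_add, smul_smul, smul_smul, smul_smul, smul_smul]
          rw [mul_div_assoc', mul_div_assoc', mul_comm y, mul_comm y,
            mul_div_assoc, mul_div_assoc, div_self (ne_of_gt hpos), mul_one, mul_one]
  have hST : S ⊆ T := by
    rintro p ⟨y, hy0, hyr, hp2, hp1⟩
    refine ⟨by rw [hp2]; exact_mod_cast hy0, by rw [hp2]; exact_mod_cast hyr, by rw [hp2]; exact hp1⟩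
  apply Set.Subset.antisymm
  · exact convexHull_min hST hTconv
  · rintro p ⟨h0, hr', hd⟩
    obtain ⟨z, hz, hx⟩ := (hdil _ _).1 hd
    have hrpos : (0:ℝ) < r := by exact_mod_cast hr
    have hA : ((0 : Fin d → ℝ), (0:ℝ)) ∈ S := by
      refine ⟨0, le_refl _, by exact_mod_cast hr.le, by simp, ?_⟩
      simp [dil]
    have hB : (((r:ℝ) • z, (r:ℝ)) : (Fin d → ℝ) × ℝ) ∈ S := by
      refine ⟨r, by positivity, le_refl _, by simp, ?_⟩
      rw [hdil]
      exact ⟨z, hz, by push_cast; rfl⟩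
    have key : p = (1 - p.2 / r) • ((0 : Fin d → ℝ), (0:ℝ)) +
        (p.2 / r) • (((r:ℝ) • z, (r:ℝ)) : (Fin d → ℝ) × ℝ) := by
      ext i
      · show p.1 i = _
        simp only [Prod.fst_add, Prod.smul_fst, smul_zero, zero_add, smul_smul]
        rw [div_mul_cancel₀ _ (ne_of_gt hrpos)]
        rw [hx]
      · show p.2 = _
        simp only [Prod.snd_add, Prod.smul_snd, smul_eq_mul, mul_zero, zero_add]
        rw [div_mul_cancel₀ _ (ne_of_gt hrpos)]
    rw [key]
    exact (convex_convexHull ℝ S) (subset_convexHull ℝ S hA) (subset_convexHull ℝ S hB)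
      (by have : p.2 / r ≤ 1 := by rw [div_le_one hrpos]; exact hr'
          linarith)
      (by positivity) (by ring)
end

section
/- Let P = {y ∈ ℝ^k : A y ≤ b} ⊆ [0,1]^k where A is a totally unimodular integer matrix and b is an integer vector. Then for every positive integer r, every integer point Y of the dilated polytope r·P = {y : A y ≤ r·b} can be written as a sum Y = y₁ + ... + y_r of r integer points y₁, ..., y_r ∈ P ∩ {0,1}^k. -/
/-- A matrix is totally unimodular if every square submatrix has determinant
in `{-1, 0, 1}`. -/
def TotallyUnimodular {m k : ℕ} (A : Matrix (Fin m) (Fin k) ℤ) : Prop :=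
  ∀ (n : ℕ) (f : Fin n → Fin m) (g : Fin n → Fin k),
    Function.Injective f → Function.Injective g →
      (A.submatrix f g).det ∈ ({-1, 0, 1} : Set ℤ)

lemma mem101_iff (a : ℤ) : a ∈ ({-1, 0, 1} : Set ℤ) ↔ |a| ≤ 1 := by
  simp only [Set.mem_insert_iff, Set.mem_singleton_iff]
  rw [Int.abs_le_one_iff]
  tauto

lemma det_eq_zero_of_row_smul {n : ℕ} (B : Matrix (Fin n) (Fin n) ℤ) {i j : Fin n}
    (hij : i ≠ j) (c : ℤ) (h : B i = c • B j) : B.det = 0 := by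
  have hB : B = B.updateRow i (c • B j) := by rw [← h, Matrix.updateRow_eq_self]
  rw [hB, Matrix.det_updateRow_smul]
  have : (B.updateRow i (B j)).det = 0 :=
    Matrix.det_zero_of_row_eq hij (by simp [Matrix.updateRow_apply, hij.symm, hij])
  rw [this, mul_zero]

open Classical in
lemma stack_TU {m k N : ℕ} (A : Matrix (Fin m) (Fin k) ℤ) (hTU : TotallyUnimodular A)
    (M : Matrix (Fin N) (Fin k) ℤ)
    (hM : ∀ p, (∃ i, M p = A i ∨ M p = -A i) ∨
      (∃ s, M p = Pi.single s 1 ∨ M p = -Pi.single s 1)) :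
    TotallyUnimodular M := by
  intro n
  induction n with
  | zero =>
    intro f g _ _
    simp [Matrix.det_fin_zero]
  | succ n ih =>
    intro f g hf hg
    rw [mem101_iff]
    by_cases hunit : ∃ p s, M (f p) = Pi.single s 1 ∨ M (f p) = -Pi.single s 1
    · obtain ⟨p, s, hps⟩ := hunit
      by_cases hs : ∃ q, g q = s
      · obtain ⟨q, hq⟩ := hs
        rw [Matrix.det_succ_row _ p]
        rw [Finset.sum_eq_single q]
        · have hminor : ((M.submatrix f g).submatrix p.succAbove q.succAbove).det ∈
              ({-1, 0, 1} : Set ℤ) := by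
            rw [Matrix.submatrix_submatrix]
            exact ih _ _ (hf.comp (Fin.succAbove_right_injective))
              (hg.comp (Fin.succAbove_right_injective))
          rw [mem101_iff] at hminor
          have habs : |M.submatrix f g p q| ≤ 1 := by
            rcases hps with h | h <;> simp [Matrix.submatrix_apply, h, hq, Pi.single_apply]
          calc |(-1 : ℤ) ^ ((p : ℕ) + (q : ℕ)) * M.submatrix f g p q *
                ((M.submatrix f g).submatrix p.succAbove q.succAbove).det|
              = |(-1 : ℤ) ^ ((p : ℕ) + (q : ℕ))| * |M.submatrix f g p q| *
                |((M.submatrix f g).submatrix p.succAbove q.succAbove).det| := by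
                rw [abs_mul, abs_mul]
            _ ≤ 1 := by
                rw [abs_pow, abs_neg, abs_one, one_pow, one_mul]
                exact mul_le_one₀ habs (abs_nonneg _) hminor
        · intro j _ hj
          have : M.submatrix f g p j = 0 := by
            have hgj : g j ≠ s := fun hc => hj (hg (hc.trans hq.symm))
            rcases hps with h | h <;>
              simp [Matrix.submatrix_apply, h, Pi.single_apply, hgj]
          rw [this, mul_zero, zero_mul]
        · intro h; exact absurd (Finset.mem_univ q) h
      · have : (M.submatrix f g).det = 0 := by
          apply Matrix.det_eq_zero_of_row_eq_zero p
          intro j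
          have hgj : g j ≠ s := fun hc => hs ⟨j, hc⟩
          rcases hps with h | h <;>
            simp [Matrix.submatrix_apply, h, Pi.single_apply, hgj]
        simp [this]
    · push_neg at hunit
      have hrow : ∀ p : Fin (n+1), ∃ i, M (f p) = A i ∨ M (f p) = -A i := by
        intro p
        rcases hM (f p) with h | ⟨s, h⟩
        · exact h
        · exact absurd h (by simpa using hunit p s)
      choose φ hφ using hrow
      by_cases hinj : Function.Injective φ
      · set ε : Fin (n+1) → ℤ := fun p => if M (f p) = A (φ p) then 1 else -1 with hε
        have hrow2 : ∀ p, M (f p) = ε p • A (φ p) := by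
          intro p
          by_cases h : M (f p) = A (φ p)
          · simp [hε, h]
          · rcases hφ p with h' | h'
            · exact absurd h' h
            · have he : ε p = -1 := by simp [hε, h]
              rw [he, h']; ext j; simp
        have hfact : M.submatrix f g = Matrix.diagonal ε * A.submatrix φ g := by
          ext p q
          simp [Matrix.mul_apply, Matrix.diagonal, Matrix.submatrix_apply,
            Finset.sum_ite_eq, hrow2 p]
        rw [hfact, Matrix.det_mul, Matrix.det_diagonal, abs_mul, Finset.abs_prod]
        have h1 : ∀ p ∈ Finset.univ, |ε p| = 1 := by
          intro p _
          by_cases h : M (f p) = A (φ p) <;> simp [hε, h]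
        rw [Finset.prod_congr rfl h1, Finset.prod_const, one_pow, one_mul]
        rw [← mem101_iff]
        exact hTU _ φ g hinj hg
      · rw [Function.not_injective_iff] at hinj
        obtain ⟨p, q, hpq, hne⟩ := hinj
        set ε : Fin (n+1) → ℤ := fun p => if M (f p) = A (φ p) then 1 else -1 with hε
        have hrow2 : ∀ p, M (f p) = ε p • A (φ p) := by
          intro p
          by_cases h : M (f p) = A (φ p)
          · simp [hε, h]
          · rcases hφ p with h' | h'
            · exact absurd h' h
            · have he : ε p = -1 := by simp [hε, h]
              rw [he, h']; ext j; simp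
        have hsq : ∀ p, ε p * ε p = 1 := by
          intro p; by_cases h : M (f p) = A (φ p) <;> simp [hε, h]
        have hrows : M (f p) = (ε p * ε q) • M (f q) := by
          rw [hrow2 p, hrow2 q, hpq, smul_smul, mul_assoc, hsq q, mul_one]
        have hc : (M.submatrix f g) p = (ε p * ε q) • (M.submatrix f g) q := by
          ext j
          have := congrFun hrows (g j)
          simpa [Matrix.submatrix_apply] using this
        rw [det_eq_zero_of_row_smul _ hne _ hc]
        simp


lemma exists_lexmin {k : ℕ} (S : Set (Fin k → ℝ)) (hS : IsCompact S) (hne : S.Nonempty) :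
    ∃ x ∈ S, ∀ y ∈ S, ∀ i : Fin k, (∀ i' : Fin k, i' < i → y i' = x i') → x i ≤ y i := by
  have main : ∀ j : ℕ, ∃ C : Set (Fin k → ℝ), C.Nonempty ∧ IsCompact C ∧ C ⊆ S ∧
      (∀ x ∈ C, ∀ y ∈ S, (∀ i : Fin k, (i : ℕ) < j → y i = x i) → y ∈ C) ∧
      (∀ x ∈ C, ∀ y ∈ S, ∀ i : Fin k, (i : ℕ) < j →
        (∀ i' : Fin k, i' < i → y i' = x i') → x i ≤ y i) := by
    intro j
    induction j with
    | zero =>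
      exact ⟨S, hne, hS, le_refl _, fun x _ y hy _ => hy,
        fun x _ y _ i hi => absurd hi (Nat.not_lt_zero _)⟩
    | succ j ihj =>
      obtain ⟨C, hCne, hCc, hCS, hCcl, hCmin⟩ := ihj
      by_cases hjk : j < k
      · set ι : Fin k := ⟨j, hjk⟩ with hι
        obtain ⟨x₀, hx₀C, hx₀min⟩ := hCc.exists_isMinOn hCne (continuous_apply ι).continuousOn
        refine ⟨C ∩ {x | x ι = x₀ ι}, ⟨x₀, hx₀C, rfl⟩,
          hCc.inter_right (isClosed_eq (continuous_apply ι) continuous_const),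
          fun x hx => hCS hx.1, ?_, ?_⟩
        · intro x hx y hy hagree
          refine ⟨hCcl x hx.1 y hy fun i hi => hagree i (Nat.lt_succ_of_lt hi), ?_⟩
          have := hagree ι (Nat.lt_succ_self j)
          rw [Set.mem_setOf_eq, this, hx.2]
        · intro x hx y hy i hi hagree
          rcases Nat.lt_succ_iff_lt_or_eq.mp hi with hi' | hi'
          · exact hCmin x hx.1 y hy i hi' hagree
          · have hiι : i = ι := Fin.ext hi'
            have hyC : y ∈ C := by
              apply hCcl x hx.1 y hy
              intro i' hii'
              exact hagree i' (by rw [hiι]; exact Fin.lt_def.mpr hii')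
            calc x i = x₀ ι := by rw [hiι]; exact hx.2
              _ ≤ y ι := hx₀min hyC
              _ = y i := by rw [hiι]
      · refine ⟨C, hCne, hCc, hCS, ?_, ?_⟩
        · intro x hx y hy hagree
          exact hCcl x hx y hy fun i hi => hagree i (Nat.lt_succ_of_lt hi)
        · intro x hx y hy i _ hagree
          exact hCmin x hx y hy i (lt_of_lt_of_le i.isLt (Nat.not_lt.mp hjk)) hagree
  obtain ⟨C, hCne, _, hCS, _, hCmin⟩ := main k
  obtain ⟨x, hx⟩ := hCne
  exact ⟨x, hCS hx, fun y hy i => hCmin x hx y hy i i.isLt⟩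

lemma cast_mulVec {n k : ℕ} (M : Matrix (Fin n) (Fin k) ℤ) (z : Fin k → ℤ) (i : Fin n) :
    (M.map (Int.cast : ℤ → ℝ)).mulVec (fun j => (z j : ℝ)) i = ((M.mulVec z i : ℤ) : ℝ) := by
  simp only [Matrix.mulVec, dotProduct, Matrix.map_apply]
  push_cast
  rfl

lemma tu_integral_point {n k : ℕ} (M : Matrix (Fin n) (Fin k) ℤ) (d : Fin n → ℤ)
    (hTU : TotallyUnimodular M)
    (hbox : ∀ x : Fin k → ℝ, (∀ i, (M.map (Int.cast : ℤ → ℝ)).mulVec x i ≤ (d i : ℝ)) →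
      ∀ s, x s ∈ Set.Icc (0 : ℝ) 1)
    (hne : ∃ x : Fin k → ℝ, ∀ i, (M.map (Int.cast : ℤ → ℝ)).mulVec x i ≤ (d i : ℝ)) :
    ∃ z : Fin k → ℤ, ∀ i, M.mulVec z i ≤ d i := by
  classical
  set Mr := M.map (Int.cast : ℤ → ℝ) with hMr
  set S : Set (Fin k → ℝ) := {x | ∀ i, Mr.mulVec x i ≤ (d i : ℝ)} with hSdef
  have hcont : ∀ i, Continuous fun x : Fin k → ℝ => Mr.mulVec x i := by
    intro i
    simp only [Matrix.mulVec, dotProduct]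
    exact continuous_finset_sum _ fun j _ => continuous_const.mul (continuous_apply j)
  have hclosed : IsClosed S := by
    have : S = ⋂ i, {x : Fin k → ℝ | Mr.mulVec x i ≤ (d i : ℝ)} := by
      ext x; simp [hSdef]
    rw [this]
    exact isClosed_iInter fun i => isClosed_le (hcont i) continuous_const
  have hcomp : IsCompact S := by
    refine IsCompact.of_isClosed_subset
      (isCompact_univ_pi fun _ : Fin k => (isCompact_Icc : IsCompact (Set.Icc (0:ℝ) 1)))
      hclosed ?_
    intro x hx
    rw [Set.mem_univ_pi]
    exact fun s => hbox x hx s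
  obtain ⟨x, hxS, hlex⟩ := exists_lexmin S hcomp hne
  set tight : Set (Fin n) := {i | Mr.mulVec x i = (d i : ℝ)} with htight
  set row : Fin n → (Fin k → ℝ) := fun i j => (M i j : ℝ) with hrowdef
  have hrowVec : ∀ (i) (y : Fin k → ℝ), Mr.mulVec y i = ∑ j, row i j * y j := by
    intro i y
    simp [Matrix.mulVec, dotProduct, hMr, hrowdef]
  have hspan : Submodule.span ℝ (row '' tight) = ⊤ := by
    by_contra hU
    obtain ⟨φ, hφ0, hφ⟩ := Submodule.exists_dual_map_eq_bot_of_lt_top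
      (lt_top_iff_ne_top.mpr hU) inferInstance
    set v : Fin k → ℝ := fun j => φ (fun j' => if j = j' then 1 else 0) with hv
    have hφeq : ∀ w : Fin k → ℝ, φ w = ∑ j, w j * v j := by
      intro w
      rw [LinearMap.pi_apply_eq_sum_univ φ w]
      simp [hv, smul_eq_mul]
    have hvne : v ≠ 0 := by
      intro hv0
      apply hφ0
      refine LinearMap.ext fun u => ?_
      rw [hφeq u, hv0]
      simp
    have horth : ∀ i ∈ tight, ∑ j, row i j * v j = 0 := by
      intro i hi
      have hz : φ (row i) = 0 := by
        have hmem : row i ∈ Submodule.span ℝ (row '' tight) :=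
          Submodule.subset_span ⟨i, hi, rfl⟩
        have := Submodule.mem_map_of_mem (f := φ) hmem
        rw [hφ] at this
        simpa using this
      rw [hφeq] at hz
      exact hz
    have hTne : (Finset.univ.filter fun j => v j ≠ 0).Nonempty := by
      rcases Function.ne_iff.mp hvne with ⟨j, hj⟩
      exact ⟨j, by simpa using hj⟩
    set i₀ := (Finset.univ.filter fun j => v j ≠ 0).min' hTne with hi₀
    have hvi₀ : v i₀ ≠ 0 := by
      have := (Finset.univ.filter fun j => v j ≠ 0).min'_mem hTne
      simpa using this
    set σ : ℝ := if v i₀ < 0 then 1 else -1 with hσ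
    have hσv : σ * v i₀ < 0 := by
      rcases lt_or_gt_of_ne hvi₀ with h | h
      · simp only [hσ, if_pos h]; linarith
      · rw [hσ, if_neg (not_lt.mpr h.le)]; nlinarith
    set w : Fin k → ℝ := σ • v with hw
    have hrowε : ∀ i : Fin n, ∃ e : ℝ, 0 < e ∧ ∀ t : ℝ, 0 < t → t ≤ e →
        Mr.mulVec (x + t • w) i ≤ (d i : ℝ) := by
      intro i
      have hexp : ∀ t : ℝ, Mr.mulVec (x + t • w) i
          = Mr.mulVec x i + t * ∑ j, row i j * w j := by
        intro t
        rw [hrowVec, hrowVec]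
        simp only [Pi.add_apply, Pi.smul_apply, smul_eq_mul]
        rw [Finset.mul_sum, ← Finset.sum_add_distrib]
        congr 1; ext j; ring
      by_cases hi : i ∈ tight
      · refine ⟨1, one_pos, fun t _ _ => ?_⟩
        have hz : ∑ j, row i j * w j = 0 := by
          have h0 := horth i hi
          simp only [hw, Pi.smul_apply, smul_eq_mul]
          calc ∑ j, row i j * (σ * v j) = σ * ∑ j, row i j * v j := by
                rw [Finset.mul_sum]; congr 1; ext j; ring
            _ = 0 := by rw [h0, mul_zero]
        rw [hexp, hz, mul_zero, add_zero]
        exact le_of_eq hi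
      · have hslack : Mr.mulVec x i < (d i : ℝ) := lt_of_le_of_ne (hxS i) hi
        set a := ∑ j, row i j * w j with ha
        by_cases ha0 : a ≤ 0
        · refine ⟨1, one_pos, fun t ht _ => ?_⟩
          rw [hexp]
          nlinarith
        · push_neg at ha0
          refine ⟨((d i : ℝ) - Mr.mulVec x i) / a,
            div_pos (by linarith) ha0, fun t ht hte => ?_⟩
          rw [hexp]
          have hta : t * a ≤ (d i : ℝ) - Mr.mulVec x i := by
            calc t * a ≤ (((d i : ℝ) - Mr.mulVec x i) / a) * a := by nlinarith
              _ = (d i : ℝ) - Mr.mulVec x i := div_mul_cancel₀ _ (ne_of_gt ha0)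
          linarith
    choose E hE using hrowε
    obtain ⟨ε, hεmem, hεmin⟩ := Finset.exists_min_image
      (insert (1:ℝ) (Finset.image E Finset.univ)) id ⟨1, Finset.mem_insert_self _ _⟩
    have hεpos : 0 < ε := by
      rcases Finset.mem_insert.mp hεmem with h | h
      · rw [h]; exact one_pos
      · obtain ⟨i, -, hi⟩ := Finset.mem_image.mp h
        rw [← hi]; exact (hE i).1
    have hεle : ∀ i, ε ≤ E i := fun i => by
      simpa using hεmin _ (Finset.mem_insert_of_mem (Finset.mem_image_of_mem E (Finset.mem_univ i)))
    set y := x + ε • w with hy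
    have hyS : y ∈ S := fun i => (hE i).2 ε hεpos (hεle i)
    have hagree : ∀ i' : Fin k, i' < i₀ → y i' = x i' := by
      intro i' hi'
      have hv0 : v i' = 0 := by
        by_contra hne'
        have : i₀ ≤ i' := Finset.min'_le _ _ (by simp [hne'])
        exact absurd hi' (not_lt.mpr this)
      simp [hy, hw, hv0]
    have hcontr := hlex y hyS i₀ hagree
    have hyi₀ : y i₀ = x i₀ + ε * (σ * v i₀) := rfl
    nlinarith
  -- extract a basis from the tight rows
  set V : Set (Fin k → ℝ) := row '' tight with hV
  obtain ⟨t, htV, htspan, htli⟩ := exists_linearIndependent ℝ V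
  rw [hspan] at htspan
  have htfin : t.Finite := htli.setFinite
  haveI := htfin.fintype
  have hbasis : Module.Basis t ℝ (Fin k → ℝ) := Module.Basis.mk htli (by
    rw [← htspan]
    exact le_of_eq (by rw [Subtype.range_coe]))
  have hcard : Fintype.card t = k := by
    have h1 := Module.finrank_eq_card_basis hbasis
    rw [Module.finrank_fin_fun] at h1
    exact h1.symm
  set e : Fin k ≃ t := (Fintype.equivFinOfCardEq hcard).symm with he
  have hcho : ∀ u : t, ∃ i, i ∈ tight ∧ row i = (u : Fin k → ℝ) := by
    intro u
    obtain ⟨i, hi, hrow⟩ := htV u.2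
    exact ⟨i, hi, hrow⟩
  choose ψ hψt hψr using hcho
  set f : Fin k → Fin n := fun a => ψ (e a) with hfdef
  have hrowsf : ∀ a, row (f a) = ((e a : t) : Fin k → ℝ) := fun a => hψr (e a)
  have hfinj : Function.Injective f := fun a a' haa =>
    e.injective (Subtype.ext (by rw [← hrowsf a, ← hrowsf a', haa]))
  set B : Matrix (Fin k) (Fin k) ℤ := M.submatrix f id with hB
  set Bℝ : Matrix (Fin k) (Fin k) ℝ := Mr.submatrix f id with hBℝ
  have hBmap : Bℝ = B.map (Int.cast : ℤ → ℝ) := by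
    ext a q; simp [hB, hBℝ, hMr]
  have hBli : LinearIndependent ℝ (fun a => Bℝ a) := by
    have hcast : (fun a => Bℝ a) = fun a => ((e a : t) : Fin k → ℝ) := by
      ext a q
      have := congrFun (hrowsf a) q
      simpa [hBℝ, hrowdef, hMr] using this
    rw [hcast]
    exact htli.comp e e.injective
  have hBunit : IsUnit Bℝ := Matrix.linearIndependent_rows_iff_isUnit.mp hBli
  have hdetne : Bℝ.det ≠ 0 := by
    intro h
    exact (Matrix.isUnit_iff_isUnit_det _ |>.mp hBunit).ne_zero h
  have hdetcast : Bℝ.det = ((B.det : ℤ) : ℝ) := by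
    rw [hBmap]
    exact (RingHom.map_det (Int.castRingHom ℝ) B).symm
  have hdetB : B.det = 1 ∨ B.det = -1 := by
    have hmem := hTU k f id hfinj Function.injective_id
    rcases hmem with h | h | h
    · right; exact h
    · exfalso; apply hdetne; rw [hdetcast, h]; simp
    · left; exact h
  have hdet2 : B.det * B.det = 1 := by rcases hdetB with h | h <;> rw [h] <;> ring
  set z : Fin k → ℤ := B.det • (B.adjugate.mulVec fun a => d (f a)) with hz
  have hBz : B.mulVec z = fun a => d (f a) := by
    rw [hz, Matrix.mulVec_smul, Matrix.mulVec_mulVec, Matrix.mul_adjugate,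
      Matrix.smul_mulVec, Matrix.one_mulVec, smul_smul, hdet2, one_smul]
  have hBx : Bℝ.mulVec x = fun a => (d (f a) : ℝ) := by
    ext a
    have htighta : Mr.mulVec x (f a) = (d (f a) : ℝ) := hψt (e a)
    rw [← htighta]
    simp [hBℝ, Matrix.mulVec, dotProduct, Matrix.submatrix_apply]
  have hcastz : Bℝ.mulVec (fun j => (z j : ℝ)) = fun a => (d (f a) : ℝ) := by
    ext a
    rw [hBmap, cast_mulVec B z a, congrFun hBz a]
  have hxz : x = fun j => (z j : ℝ) := by
    have hinj := Matrix.mulVec_injective_iff_isUnit.mpr hBunit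
    apply hinj
    rw [hBx, hcastz]
  refine ⟨z, fun i => ?_⟩
  have hxi : Mr.mulVec x i ≤ (d i : ℝ) := hxS i
  rw [hxz] at hxi
  have hxi2 : ((M.mulVec z i : ℤ) : ℝ) ≤ ((d i : ℤ) : ℝ) := by
    rw [← cast_mulVec M z i]; exact hxi
  exact_mod_cast hxi2

/-- Integer decomposition property of polytopes described by totally unimodular
systems: every integer point of `r·P` is a sum of `r` binary points of `P`. -/
theorem stmt_13 {m k : ℕ} (A : Matrix (Fin m) (Fin k) ℤ) (b : Fin m → ℤ)
    (hTU : TotallyUnimodular A)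
    (hP : ∀ y : Fin k → ℝ,
      (∀ i, (A.map (Int.cast : ℤ → ℝ)).mulVec y i ≤ (b i : ℝ)) →
        ∀ s, y s ∈ Set.Icc (0 : ℝ) 1)
    (r : ℕ) (hr : 0 < r) (Y : Fin k → ℤ)
    (hY : ∀ i, A.mulVec Y i ≤ (r : ℤ) * b i) :
    ∃ y : Fin r → (Fin k → ℤ),
      (∀ j, (∀ i, A.mulVec (y j) i ≤ b i) ∧ ∀ s, y j s ∈ ({0, 1} : Set ℤ)) ∧
        Y = ∑ j, y j := by
  classical
  induction r generalizing Y with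
  | zero => exact absurd hr (by simp)
  | succ q ih =>
    -- boundedness of Y
    have hx0feas : ∀ i, (A.map (Int.cast : ℤ → ℝ)).mulVec
        (fun s => (Y s : ℝ) / (q + 1)) i ≤ (b i : ℝ) := by
      intro i
      have hmv : (A.map (Int.cast : ℤ → ℝ)).mulVec (fun s => (Y s : ℝ) / (q + 1)) i
          = ((A.mulVec Y i : ℤ) : ℝ) / (q + 1) := by
        rw [← cast_mulVec A Y i]
        simp only [Matrix.mulVec, dotProduct, Matrix.map_apply]
        rw [Finset.sum_div]
        congr 1; ext j; ring
      rw [hmv]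
      rw [div_le_iff₀ (by positivity)]
      have := hY i
      have hcast : ((A.mulVec Y i : ℤ) : ℝ) ≤ (((q : ℤ) + 1) * b i : ℤ) := by
        exact_mod_cast (by push_cast at this ⊢; linarith : (A.mulVec Y i : ℤ) ≤ ((q : ℤ) + 1) * b i)
      push_cast at hcast ⊢
      linarith
    have hbox0 := hP _ hx0feas
    have hY0 : ∀ s, 0 ≤ Y s := by
      intro s
      have h1 := (hbox0 s).1
      have : (0 : ℝ) ≤ (Y s : ℝ) := by
        have hq : (0 : ℝ) < (q : ℝ) + 1 := by positivity
        have h3 := mul_nonneg h1 hq.le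
        rwa [div_mul_cancel₀ _ (ne_of_gt hq)] at h3
      exact_mod_cast this
    have hYub : ∀ s, Y s ≤ (q : ℤ) + 1 := by
      intro s
      have h1 := (hbox0 s).2
      have : (Y s : ℝ) ≤ (q : ℝ) + 1 := by
        have hq : (0 : ℝ) < (q : ℝ) + 1 := by positivity
        rw [div_le_one hq] at h1
        exact h1
      exact_mod_cast this
    by_cases hq0 : q = 0
    · -- base case r = 1 : Y itself is a binary feasible point
      subst hq0
      refine ⟨fun _ => Y, fun j => ⟨fun i => ?_, fun s => ?_⟩, ?_⟩
      · have := hY i; simpa using this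
      · have h0 := hY0 s
        have h1 := hYub s
        simp only [Set.mem_insert_iff, Set.mem_singleton_iff]
        omega
      · simp [Fin.sum_univ_one]
    · have hqpos : 0 < q := Nat.pos_of_ne_zero hq0
      -- build the stacked system
      set ι := Fin m ⊕ (Fin m ⊕ (Fin k ⊕ Fin k)) with hι
      set e : Fin (m + (m + (k + k))) ≃ ι :=
        finSumFinEquiv.symm.trans ((Equiv.refl (Fin m)).sumCongr
          (finSumFinEquiv.symm.trans ((Equiv.refl (Fin m)).sumCongr finSumFinEquiv.symm)))
        with he
      set Rrow : ι → (Fin k → ℤ) :=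
        Sum.elim (fun i => A i) (Sum.elim (fun i => -A i)
          (Sum.elim (fun s => Pi.single s 1) (fun s => -Pi.single s 1))) with hRrow
      set D : ι → ℤ :=
        Sum.elim (fun i => b i) (Sum.elim (fun i => (q : ℤ) * b i - A.mulVec Y i)
          (Sum.elim (fun s => min 1 (Y s)) (fun s => -(max 0 (Y s - (q : ℤ)))))) with hD
      set M : Matrix (Fin (m + (m + (k + k)))) (Fin k) ℤ :=
        Matrix.of fun p j => Rrow (e p) j with hM
      have hMrow : ∀ p, M p = Rrow (e p) := fun p => rfl
      have hMTU : TotallyUnimodular M := by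
        apply stack_TU A hTU
        intro p
        rcases hep : e p with i | i | s | s <;> rw [hMrow p, hep]
        · exact Or.inl ⟨i, Or.inl rfl⟩
        · exact Or.inl ⟨i, Or.inr rfl⟩
        · exact Or.inr ⟨s, Or.inl rfl⟩
        · exact Or.inr ⟨s, Or.inr rfl⟩
      -- real row computations
      have hmvR : ∀ (x : Fin k → ℝ) (p), (M.map (Int.cast : ℤ → ℝ)).mulVec x p
          = ∑ j, (Rrow (e p) j : ℝ) * x j := by
        intro x p
        simp [Matrix.mulVec, dotProduct, hM]
      have hrow3R : ∀ (x : Fin k → ℝ) (s : Fin k),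
          ∑ j, ((Pi.single s 1 : Fin k → ℤ) j : ℝ) * x j = x s := by
        intro x s
        rw [Finset.sum_eq_single s]
        · simp
        · intro j _ hj; simp [Pi.single_apply, Ne.symm hj]
        · intro h; exact absurd (Finset.mem_univ s) h
      have hrow4R : ∀ (x : Fin k → ℝ) (s : Fin k),
          ∑ j, (((-Pi.single s 1 : Fin k → ℤ)) j : ℝ) * x j = -x s := by
        intro x s
        rw [← hrow3R x s, ← Finset.sum_neg_distrib]
        refine Finset.sum_congr rfl fun j _ => ?_
        push_cast [Pi.neg_apply]
        ring
      have hrow1R : ∀ (x : Fin k → ℝ) (i : Fin m),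
          ∑ j, ((A i j : ℤ) : ℝ) * x j = (A.map (Int.cast : ℤ → ℝ)).mulVec x i := by
        intro x i
        simp [Matrix.mulVec, dotProduct]
      have hrow2R : ∀ (x : Fin k → ℝ) (i : Fin m),
          ∑ j, (((-A i) j : ℤ) : ℝ) * x j = -(A.map (Int.cast : ℤ → ℝ)).mulVec x i := by
        intro x i
        rw [← hrow1R x i, ← Finset.sum_neg_distrib]
        refine Finset.sum_congr rfl fun j _ => ?_
        push_cast [Pi.neg_apply]
        ring
      -- box property for the stacked system
      have hsbox : ∀ x : Fin k → ℝ,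
          (∀ p, (M.map (Int.cast : ℤ → ℝ)).mulVec x p ≤ ((D (e p) : ℤ) : ℝ)) →
          ∀ s, x s ∈ Set.Icc (0 : ℝ) 1 := by
        intro x hx s
        have h3 := hx (e.symm (Sum.inr (Sum.inr (Sum.inl s))))
        have h4 := hx (e.symm (Sum.inr (Sum.inr (Sum.inr s))))
        rw [hmvR, Equiv.apply_symm_apply] at h3 h4
        simp only [hRrow, hD, Sum.elim_inr, Sum.elim_inl] at h3 h4
        rw [hrow3R] at h3
        rw [hrow4R] at h4
        constructor
        · have hmx : ((-(max 0 (Y s - (q : ℤ))) : ℤ) : ℝ) ≤ 0 := by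
            have h5 : (-(max 0 (Y s - (q : ℤ))) : ℤ) ≤ 0 := neg_nonpos.mpr (le_max_left 0 _)
            exact_mod_cast h5
          linarith [h4, hmx]
        · have : ((min 1 (Y s) : ℤ) : ℝ) ≤ 1 := by
            have : (min 1 (Y s) : ℤ) ≤ 1 := min_le_left _ _
            exact_mod_cast this
          linarith [h3, this]
      -- the fractional point Y/(q+1) is feasible for the stacked system
      have hq1 : (0:ℝ) < (q:ℝ) + 1 := by positivity
      set x₀ : Fin k → ℝ := fun s => (Y s : ℝ) / ((q:ℝ) + 1) with hx₀
      have hAx₀ : ∀ i, (A.map (Int.cast : ℤ → ℝ)).mulVec x₀ i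
          = ((A.mulVec Y i : ℤ) : ℝ) / ((q:ℝ) + 1) := by
        intro i
        rw [← cast_mulVec A Y i]
        simp only [Matrix.mulVec, dotProduct, Matrix.map_apply, hx₀]
        rw [Finset.sum_div]
        refine Finset.sum_congr rfl fun j _ => ?_
        ring
      have hsne : ∃ x : Fin k → ℝ,
          ∀ p, (M.map (Int.cast : ℤ → ℝ)).mulVec x p ≤ ((D (e p) : ℤ) : ℝ) := by
        refine ⟨x₀, fun p => ?_⟩
        rw [hmvR]
        rcases hep : e p with i | i | s | s <;>
          simp only [hRrow, hD, Sum.elim_inl, Sum.elim_inr]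
        · rw [hrow1R]
          exact hx0feas i
        · rw [hrow2R]
          have hc : ((A.mulVec Y i : ℤ) : ℝ) ≤ ((q:ℝ) + 1) * (b i : ℝ) := by
            have := hY i
            have h2 : ((A.mulVec Y i : ℤ) : ℝ) ≤ (((q + 1 : ℕ) : ℤ) * b i : ℤ) := by
              exact_mod_cast this
            push_cast at h2
            linarith
          have hmu : ((A.mulVec Y i : ℤ) : ℝ) / ((q:ℝ) + 1) * ((q:ℝ) + 1)
              = ((A.mulVec Y i : ℤ) : ℝ) := div_mul_cancel₀ _ (ne_of_gt hq1)
          rw [hAx₀ i]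
          push_cast
          nlinarith [hc, hmu, hq1]
        · rw [hrow3R]
          have h1 : x₀ s ≤ 1 := (hbox0 s).2
          have h2 : x₀ s ≤ (Y s : ℝ) := by
            rw [hx₀]
            have h0 : (0:ℝ) ≤ (Y s : ℝ) := by exact_mod_cast hY0 s
            exact div_le_self h0 (by linarith)
          have : x₀ s ≤ min 1 ((Y s : ℝ)) := le_min h1 h2
          push_cast
          exact this
        · rw [hrow4R]
          have h1 : (0:ℝ) ≤ x₀ s := (hbox0 s).1
          have h2 : (Y s : ℝ) - (q:ℝ) ≤ x₀ s := by
            have hub : (Y s : ℝ) ≤ (q:ℝ) + 1 := by exact_mod_cast hYub s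
            have hmu : x₀ s * ((q:ℝ) + 1) = (Y s : ℝ) := by
              rw [hx₀]; exact div_mul_cancel₀ _ (ne_of_gt hq1)
            nlinarith [hub, hmu, hq1, hqpos, (by exact_mod_cast Nat.one_le_iff_ne_zero.mpr hq0 : (1:ℝ) ≤ (q:ℝ))]
          have : max 0 ((Y s : ℝ) - (q:ℝ)) ≤ x₀ s := max_le h1 h2
          push_cast
          linarith [this]
      -- integer point of the stacked system
      obtain ⟨z, hz⟩ := tu_integral_point M (fun p => D (e p)) hMTU hsbox hsne
      -- integer row computations
      have hmvZ : ∀ p, M.mulVec z p = ∑ j, Rrow (e p) j * z j := by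
        intro p
        simp [hM, Matrix.mulVec, dotProduct]
      have hz1 : ∀ i, A.mulVec z i ≤ b i := by
        intro i
        have h := hz (e.symm (Sum.inl i))
        rw [hmvZ, Equiv.apply_symm_apply] at h
        simpa [hRrow, hD, Matrix.mulVec, dotProduct] using h
      have hz2 : ∀ i, A.mulVec Y i - A.mulVec z i ≤ (q : ℤ) * b i := by
        intro i
        have h := hz (e.symm (Sum.inr (Sum.inl i)))
        rw [hmvZ, Equiv.apply_symm_apply] at h
        simp only [hRrow, hD, Sum.elim_inl, Sum.elim_inr] at h
        have hneg : ∑ j, (-A i) j * z j = -(A.mulVec z i) := by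
          simp [Matrix.mulVec, dotProduct, Finset.sum_neg_distrib]
        rw [hneg] at h
        linarith
      have hz3 : ∀ s, z s ≤ min 1 (Y s) := by
        intro s
        have h := hz (e.symm (Sum.inr (Sum.inr (Sum.inl s))))
        rw [hmvZ, Equiv.apply_symm_apply] at h
        simp only [hRrow, hD, Sum.elim_inl, Sum.elim_inr] at h
        have hsingle : ∑ j, (Pi.single s 1 : Fin k → ℤ) j * z j = z s := by
          rw [Finset.sum_eq_single s]
          · simp
          · intro j _ hj; simp [Pi.single_apply, Ne.symm hj]
          · intro hcon; exact absurd (Finset.mem_univ s) hcon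
        rwa [hsingle] at h
      have hz4 : ∀ s, max 0 (Y s - (q:ℤ)) ≤ z s := by
        intro s
        have h := hz (e.symm (Sum.inr (Sum.inr (Sum.inr s))))
        rw [hmvZ, Equiv.apply_symm_apply] at h
        simp only [hRrow, hD, Sum.elim_inl, Sum.elim_inr] at h
        have hsingle : ∑ j, (-Pi.single s 1 : Fin k → ℤ) j * z j = -z s := by
          rw [Finset.sum_eq_single s]
          · simp
          · intro j _ hj; simp [Pi.neg_apply, Pi.single_apply, Ne.symm hj]
          · intro hcon; exact absurd (Finset.mem_univ s) hcon
        rw [hsingle] at h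
        linarith
      -- z is binary
      have hzbin : ∀ s, z s ∈ ({0, 1} : Set ℤ) := by
        intro s
        have h1 : z s ≤ 1 := (hz3 s).trans (min_le_left _ _) |>.trans (le_refl _)
        have h2 : 0 ≤ z s := le_trans (le_max_left _ _) (hz4 s)
        simp only [Set.mem_insert_iff, Set.mem_singleton_iff]
        omega
      -- recurse on Y - z
      have hY' : ∀ i, A.mulVec (fun s => Y s - z s) i ≤ (q : ℤ) * b i := by
        intro i
        have hsub : A.mulVec (fun s => Y s - z s) i = A.mulVec Y i - A.mulVec z i := by
          simp [Matrix.mulVec, dotProduct, mul_sub, Finset.sum_sub_distrib]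
        rw [hsub]
        exact hz2 i
      obtain ⟨y', hy', hsum'⟩ := ih hqpos (fun s => Y s - z s) hY'
      refine ⟨Fin.cons z y', ?_, ?_⟩
      · intro j
        refine Fin.cases ?_ ?_ j
        · simpa using ⟨hz1, hzbin⟩
        · intro j'
          simpa using hy' j'
      · rw [Fin.sum_univ_succ]
        simp only [Fin.cons_zero, Fin.cons_succ]
        ext s
        have := congrFun hsum' s
        simp only [Finset.sum_apply, Pi.add_apply] at this ⊢
        omega
end

section
/- Let Λ, Γ ⊆ ℝ^d be nonempty compact convex sets and r a nonnegative integer. Define Ω = {(x, y) ∈ ℝ^d × {0,1} : x ∈ y ⊙ Λ + (1−y) ⊙ Γ} and Ω̃^agg = {(X, Y) ∈ ℝ^d × [0, r] : X ∈ Y ⊙ Λ + (r − Y) ⊙ Γ}. Then Ω̃^agg = conv(r ⊗ Ω) = r ⊙ conv(Ω). -/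
/-- `p ⊗ F`: the set of sums of `p` elements of `F` (and `{0}` for `p = 0`). -/
noncomputable def nsum {V : Type*} [AddCommMonoid V] (p : ℕ) (F : Set V) : Set V :=
  if p = 0 then {0} else {x | ∃ f : Fin p → V, (∀ i, f i ∈ F) ∧ x = ∑ i, f i}

open Pointwise

section helpers
variable {V : Type*} [AddCommGroup V] [Module ℝ V]

lemma smul_mem_dil {t : ℝ} {F : Set V} {a : V} (ha : a ∈ F) : t • a ∈ dil t F := by
  unfold dil
  by_cases h : t = 0
  · simp [h]
  · rw [if_neg h]; exact ⟨a, ha, rfl⟩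

lemma dil_exists {t : ℝ} {F : Set V} (hF : F.Nonempty) {x : V} (hx : x ∈ dil t F) :
    ∃ a ∈ F, x = t • a := by
  unfold dil at hx
  by_cases h : t = 0
  · obtain ⟨a, ha⟩ := hF
    rw [if_pos h] at hx
    exact ⟨a, ha, by simp [Set.mem_singleton_iff.1 hx, h]⟩
  · rw [if_neg h] at hx
    obtain ⟨a, ha, rfl⟩ := hx
    exact ⟨a, ha, rfl⟩

lemma dil_zero (F : Set V) : dil 0 F = {0} := if_pos rfl

lemma dil_ne_zero {t : ℝ} (ht : t ≠ 0) (F : Set V) : dil t F = (fun x => t • x) '' F :=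
  if_neg ht

lemma dil_one (F : Set V) : dil 1 F = F := by
  unfold dil; rw [if_neg one_ne_zero]; simp

lemma smul_image_dil {r : ℝ} (hr : r ≠ 0) (t : ℝ) (F : Set V) :
    (fun x => r • x) '' dil t F = dil (r * t) F := by
  unfold dil
  by_cases h : t = 0
  · rw [if_pos h, if_pos (by rw [h, mul_zero])]
    simp
  · rw [if_neg h, if_neg (mul_ne_zero hr h), Set.image_image]
    simp_rw [smul_smul]

lemma nsum_one (F : Set V) : nsum 1 F = F := by
  ext x
  simp only [nsum, if_neg one_ne_zero, Set.mem_setOf_eq]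
  constructor
  · rintro ⟨f, hf, rfl⟩
    simpa [Fin.sum_univ_one] using hf 0
  · intro hx
    exact ⟨fun _ => x, fun _ => hx, by simp⟩

lemma nsum_succ {p : ℕ} (hp : p ≠ 0) (F : Set V) : nsum (p + 1) F = F + nsum p F := by
  ext x
  simp only [nsum, if_neg hp, if_neg (Nat.succ_ne_zero p), Set.mem_setOf_eq, Set.mem_add]
  constructor
  · rintro ⟨f, hf, rfl⟩
    exact ⟨f 0, hf 0, ∑ i : Fin p, f (Fin.succ i), ⟨fun i => f (Fin.succ i), fun i => hf _, rfl⟩,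
      (Fin.sum_univ_succ f).symm⟩
  · rintro ⟨a, ha, b, ⟨g, hg, rfl⟩, rfl⟩
    refine ⟨Fin.cons a g, ?_, ?_⟩
    · intro i
      refine Fin.cases ?_ ?_ i
      · simpa using ha
      · intro j; simpa using hg j
    · simp [Fin.sum_univ_succ]

lemma conv_nsum (p : ℕ) {F : Set V} (hF : F.Nonempty) :
    convexHull ℝ (nsum p F) = dil (p : ℝ) (convexHull ℝ F) := by
  induction p with
  | zero =>
    simp [nsum, dil_zero, convexHull_singleton]
  | succ p ih =>
    by_cases hp : p = 0
    · subst hp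
      simp [nsum_one, dil_one]
    · have hp' : (0:ℝ) < p := by exact_mod_cast Nat.pos_of_ne_zero hp
      rw [nsum_succ hp, convexHull_add, ih]
      set C := convexHull ℝ F with hC
      have hconv : Convex ℝ C := convex_convexHull ℝ F
      have hne : C.Nonempty := hF.convexHull
      have h1 : dil (p : ℝ) C = (p : ℝ) • C := by
        unfold dil; rw [if_neg (ne_of_gt hp')]; exact Set.image_smul
      have h2 : dil ((p : ℝ) + 1) C = ((p : ℝ) + 1) • C := by
        unfold dil; rw [if_neg (by positivity)]; exact Set.image_smul
      rw [h1]
      have : ((p:ℕ) + 1 : ℝ) = (p : ℝ) + 1 := by push_cast; ring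
      rw [show ((p + 1 : ℕ) : ℝ) = (p : ℝ) + 1 by push_cast; ring, h2,
        add_comm (p:ℝ) 1, hconv.add_smul zero_le_one hp'.le, one_smul]

end helpers

section main
variable {d : ℕ}

/-- the convex hull of Ω equals the perspective set with t = 1. -/
lemma conv_omega (Λ Γ : Set (Fin d → ℝ)) (hΛne : Λ.Nonempty) (hΛconv : Convex ℝ Λ)
    (hΓne : Γ.Nonempty) (hΓconv : Convex ℝ Γ)
    (Ω : Set ((Fin d → ℝ) × ℝ))
    (hΩ : Ω = {p | p.2 ∈ ({0, 1} : Set ℝ) ∧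
        ∃ w z, w ∈ dil p.2 Λ ∧ z ∈ dil (1 - p.2) Γ ∧ p.1 = w + z}) :
    convexHull ℝ Ω = {p : (Fin d → ℝ) × ℝ | 0 ≤ p.2 ∧ p.2 ≤ 1 ∧
        ∃ w z, w ∈ dil p.2 Λ ∧ z ∈ dil (1 - p.2) Γ ∧ p.1 = w + z} := by
  have hΩ' : Ω = (Λ ×ˢ {(1:ℝ)}) ∪ (Γ ×ˢ {(0:ℝ)}) := by
    rw [hΩ]
    ext p
    simp only [Set.mem_setOf_eq, Set.mem_union, Set.mem_prod, Set.mem_singleton_iff,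
      Set.mem_insert_iff]
    constructor
    · rintro ⟨hy, w, z, hw, hz, hx⟩
      rcases hy with h0 | h1
      · right
        rw [h0, dil_zero] at hw
        rw [h0, sub_zero, dil_one] at hz
        rw [Set.mem_singleton_iff] at hw
        exact ⟨by rw [hx, hw, zero_add]; exact hz, h0⟩
      · left
        rw [h1, dil_one] at hw
        rw [h1, sub_self, dil_zero, Set.mem_singleton_iff] at hz
        exact ⟨by rw [hx, hz, add_zero]; exact hw, h1⟩
    · rintro (⟨h1, h2⟩ | ⟨h1, h2⟩)
      · exact ⟨Or.inr h2, p.1, 0, by rw [h2, dil_one]; exact h1,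
          by rw [h2, sub_self, dil_zero]; rfl, (add_zero _).symm⟩
      · exact ⟨Or.inl h2, 0, p.1, by rw [h2, dil_zero]; rfl,
          by rw [h2, sub_zero, dil_one]; exact h1, (zero_add _).symm⟩
  rw [hΩ']
  rw [(hΛconv.prod (convex_singleton (1:ℝ))).convexHull_union
    (hΓconv.prod (convex_singleton (0:ℝ)))
    (hΛne.prod (Set.singleton_nonempty _)) (hΓne.prod (Set.singleton_nonempty _))]
  ext p
  rw [mem_convexJoin]
  constructor
  · rintro ⟨a, ha, b, hb, u, v, hu, hv, huv, rfl⟩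
    rw [Set.mem_prod, Set.mem_singleton_iff] at ha hb
    have h2 : (u • a + v • b).2 = u := by
      simp [Prod.smul_snd, ha.2, hb.2]
    refine ⟨by rw [h2]; exact hu, by rw [h2]; linarith, u • a.1, v • b.1, ?_, ?_, ?_⟩
    · rw [h2]; exact smul_mem_dil ha.1
    · rw [h2]
      have : 1 - u = v := by linarith
      rw [this]; exact smul_mem_dil hb.1
    · rfl
  · rintro ⟨hy0, hy1, w, z, hw, hz, hx⟩
    obtain ⟨a, ha, rfl⟩ := dil_exists hΛne hw
    obtain ⟨b, hb, rfl⟩ := dil_exists hΓne hz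
    refine ⟨(a, 1), ⟨ha, rfl⟩, (b, 0), ⟨hb, rfl⟩, p.2, 1 - p.2, hy0, by linarith, by ring, ?_⟩
    apply Prod.ext
    · simpa using hx.symm
    · simp
  
/-- scaling of the perspective set. -/
lemma dil_K (Λ Γ : Set (Fin d → ℝ)) {t : ℝ} (ht : 0 < t) :
    dil t {p : (Fin d → ℝ) × ℝ | 0 ≤ p.2 ∧ p.2 ≤ 1 ∧
        ∃ w z, w ∈ dil p.2 Λ ∧ z ∈ dil (1 - p.2) Γ ∧ p.1 = w + z}
      = {p : (Fin d → ℝ) × ℝ | 0 ≤ p.2 ∧ p.2 ≤ t ∧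
        ∃ w z, w ∈ dil p.2 Λ ∧ z ∈ dil (t - p.2) Γ ∧ p.1 = w + z} := by
  have ht' : t ≠ 0 := ne_of_gt ht
  rw [dil_ne_zero ht']
  ext p
  simp only [Set.mem_image, Set.mem_setOf_eq]
  constructor
  · rintro ⟨q, ⟨hq0, hq1, w, z, hw, hz, hq⟩, rfl⟩
    have hsnd : (t • q).2 = t * q.2 := rfl
    refine ⟨by rw [hsnd]; positivity, by rw [hsnd]; nlinarith, t • w, t • z, ?_, ?_, ?_⟩
    · rw [hsnd, ← smul_image_dil ht' q.2 Λ]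
      exact ⟨w, hw, rfl⟩
    · have : t - (t • q).2 = t * (1 - q.2) := by rw [hsnd]; ring
      rw [this, ← smul_image_dil ht' (1 - q.2) Γ]
      exact ⟨z, hz, rfl⟩
    · show (t • q).1 = _
      rw [Prod.smul_fst, hq, smul_add]
  · rintro ⟨hp0, hpt, w, z, hw, hz, hp⟩
    refine ⟨(t⁻¹ • p.1, t⁻¹ * p.2), ⟨by positivity, ?_, t⁻¹ • w, t⁻¹ • z, ?_, ?_, ?_⟩, ?_⟩
    · rw [inv_mul_le_one₀ ht]
      exact hpt
    · show t⁻¹ • w ∈ dil (t⁻¹ * p.2) Λ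
      rw [← smul_image_dil (inv_ne_zero ht') p.2 Λ]
      exact ⟨w, hw, rfl⟩
    · have : 1 - t⁻¹ * p.2 = t⁻¹ * (t - p.2) := by field_simp
      rw [this, ← smul_image_dil (inv_ne_zero ht') (t - p.2) Γ]
      exact ⟨z, hz, rfl⟩
    · show t⁻¹ • p.1 = t⁻¹ • w + t⁻¹ • z
      rw [hp, smul_add]
    · apply Prod.ext
      · show t • t⁻¹ • p.1 = p.1
        rw [smul_smul, mul_inv_cancel₀ ht', one_smul]
      · show t * (t⁻¹ * p.2) = p.2
        field_simp

end main

/-- Tightness of the aggregated perspective relaxation (k = 1 case). -/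
theorem stmt_15 {d : ℕ} (Λ Γ : Set (Fin d → ℝ))
    (hΛne : Λ.Nonempty) (hΛc : IsCompact Λ) (hΛconv : Convex ℝ Λ)
    (hΓne : Γ.Nonempty) (hΓc : IsCompact Γ) (hΓconv : Convex ℝ Γ)
    (r : ℕ)
    (Ω : Set ((Fin d → ℝ) × ℝ))
    (hΩ : Ω = {p | p.2 ∈ ({0, 1} : Set ℝ) ∧
        ∃ w z, w ∈ dil p.2 Λ ∧ z ∈ dil (1 - p.2) Γ ∧ p.1 = w + z}) :
    ({p : (Fin d → ℝ) × ℝ | 0 ≤ p.2 ∧ p.2 ≤ (r : ℝ) ∧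
        ∃ w z, w ∈ dil p.2 Λ ∧ z ∈ dil ((r : ℝ) - p.2) Γ ∧ p.1 = w + z}
      = convexHull ℝ (nsum r Ω)) ∧
      convexHull ℝ (nsum r Ω) = dil (r : ℝ) (convexHull ℝ Ω) := by
  have hΩne : Ω.Nonempty := by
    obtain ⟨a, ha⟩ := hΛne
    exact ⟨(a, 1), by
      rw [hΩ]
      exact ⟨Or.inr rfl, a, 0, by rw [dil_one]; exact ha,
        by norm_num [dil_zero], (add_zero _).symm⟩⟩
  have h2 : convexHull ℝ (nsum r Ω) = dil (r : ℝ) (convexHull ℝ Ω) := conv_nsum r hΩne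
  refine ⟨?_, h2⟩
  rw [h2, conv_omega Λ Γ hΛne hΛconv hΓne hΓconv Ω hΩ]
  by_cases hr : r = 0
  · subst hr
    rw [Nat.cast_zero, dil_zero]
    ext p
    simp only [Set.mem_setOf_eq, Set.mem_singleton_iff]
    constructor
    · rintro ⟨h0, h1, w, z, hw, hz, hp⟩
      have hp2 : p.2 = 0 := le_antisymm h1 h0
      rw [hp2, dil_zero, Set.mem_singleton_iff] at hw
      rw [hp2, sub_zero, dil_zero, Set.mem_singleton_iff] at hz
      have : p.1 = 0 := by rw [hp, hw, hz, add_zero]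
      exact Prod.ext this hp2
    · rintro rfl
      refine ⟨le_refl 0, le_refl 0, 0, 0, ?_, ?_, ?_⟩ <;>
        simp [dil_zero, Prod.snd_zero, Prod.fst_zero]
  · have ht : (0:ℝ) < r := by exact_mod_cast Nat.pos_of_ne_zero hr
    exact (dil_K Λ Γ ht).symm
end

section
/- Let Λ ⊆ ℝ^d be a nonempty compact convex set with 0 ∉ Λ, and r a positive integer. For the mixed-integer set S = {(x, y) : y ∈ {0,1,...,r}, x ∈ y ⊙ Λ}, the projection of conv(S) onto the x-space equals the union over t ∈ [0, r] of t ⊙ Λ, which in general strictly contains r' ⊙ Λ-unions over integer r' only; moreover, proj_x conv(S) = conv(∪_{y=0}^{r} y ⊙ Λ). -/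
lemma mem_dil_iff {V : Type*} [AddCommMonoid V] [Module ℝ V] {Λ : Set V}
    (hne : Λ.Nonempty) {t : ℝ} (x : V) : x ∈ dil t Λ ↔ ∃ z ∈ Λ, x = t • z := by
  unfold dil
  split_ifs with h
  · subst h
    simp only [Set.mem_singleton_iff, zero_smul]
    exact ⟨fun hx => ⟨hne.choose, hne.choose_spec, hx⟩, fun ⟨z, _, hx⟩ => hx⟩
  · constructor
    · rintro ⟨z, hz, rfl⟩; exact ⟨z, hz, rfl⟩
    · rintro ⟨z, hz, rfl⟩; exact ⟨z, hz, rfl⟩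

theorem stmt_19 {d : ℕ} (Λ : Set (Fin d → ℝ))
    (hΛne : Λ.Nonempty) (hΛc : IsCompact Λ) (hΛconv : Convex ℝ Λ)
    (h0 : (0 : Fin d → ℝ) ∉ Λ) (r : ℕ) (hr : 0 < r)
    (S : Set ((Fin d → ℝ) × ℝ))
    (hS : S = {p | ∃ y : ℤ, 0 ≤ y ∧ y ≤ (r : ℤ) ∧ p.2 = (y : ℝ) ∧
        p.1 ∈ dil (y : ℝ) Λ}) :
    (Prod.fst '' convexHull ℝ S = ⋃ t ∈ Set.Icc (0 : ℝ) (r : ℝ), dil t Λ) ∧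
      Prod.fst '' convexHull ℝ S =
        convexHull ℝ (⋃ y ∈ Finset.range (r + 1), dil (y : ℝ) Λ) := by
  subst hS
  have hrR : (0 : ℝ) < (r : ℝ) := by exact_mod_cast hr
  set S : Set ((Fin d → ℝ) × ℝ) := {p | ∃ y : ℤ, 0 ≤ y ∧ y ≤ (r : ℤ) ∧ p.2 = (y : ℝ) ∧
        p.1 ∈ dil (y : ℝ) Λ} with hSdef
  set B : Set (Fin d → ℝ) := ⋃ t ∈ Set.Icc (0 : ℝ) (r : ℝ), dil t Λ with hBdef
  set U : Set (Fin d → ℝ) := ⋃ y ∈ Finset.range (r + 1), dil (y : ℝ) Λ with hUdef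
  have hBmem : ∀ x : Fin d → ℝ, x ∈ B ↔ ∃ t, (0 ≤ t ∧ t ≤ (r : ℝ)) ∧ ∃ z ∈ Λ, x = t • z := by
    intro x
    simp only [hBdef, Set.mem_iUnion, Set.mem_Icc, mem_dil_iff hΛne, exists_prop]
  -- B is convex
  have hBconv : Convex ℝ B := by
    rintro x hx y hy a b ha hb hab
    rw [hBmem] at hx hy ⊢
    obtain ⟨t₁, ⟨ht₁0, ht₁r⟩, z₁, hz₁, rfl⟩ := hx
    obtain ⟨t₂, ⟨ht₂0, ht₂r⟩, z₂, hz₂, rfl⟩ := hy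
    by_cases h : a * t₁ + b * t₂ = 0
    · refine ⟨0, ⟨le_refl 0, le_of_lt hrR⟩, z₁, hz₁, ?_⟩
      have h1 : a * t₁ = 0 := by nlinarith [mul_nonneg ha ht₁0, mul_nonneg hb ht₂0]
      have h2 : b * t₂ = 0 := by linarith
      simp [smul_smul, h1, h2]
    · set t := a * t₁ + b * t₂ with ht
      have ht0 : 0 ≤ t := by positivity
      refine ⟨t, ⟨ht0, by nlinarith⟩, (a * t₁ / t) • z₁ + (b * t₂ / t) • z₂, ?_, ?_⟩
      · refine hΛconv hz₁ hz₂ (by positivity) (by positivity) ?_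
        field_simp
        exact ht.symm
      · have e1 : t * (a * t₁ / t) = a * t₁ := by field_simp
        have e2 : t * (b * t₂ / t) = b * t₂ := by field_simp
        simp only [smul_add, smul_smul]
        rw [e1, e2]
  -- A ⊆ B
  have hSsub : S ⊆ Prod.fst ⁻¹' B := by
    rintro ⟨x, yR⟩ ⟨y, hy0, hyr, hy2, hx⟩
    rw [Set.mem_preimage, hBmem]
    rw [mem_dil_iff hΛne] at hx
    obtain ⟨z, hz, rfl⟩ := hx
    exact ⟨(y : ℝ), ⟨by exact_mod_cast hy0, by exact_mod_cast hyr⟩, z, hz, rfl⟩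
  have hA_sub_B : Prod.fst '' convexHull ℝ S ⊆ B := by
    have hpre : Convex ℝ (Prod.fst ⁻¹' B : Set ((Fin d → ℝ) × ℝ)) :=
      hBconv.linear_preimage (LinearMap.fst ℝ (Fin d → ℝ) ℝ)
    have := convexHull_min hSsub hpre
    intro x hx
    obtain ⟨p, hp, rfl⟩ := hx
    exact this hp
  -- U ⊆ A
  have hU_sub_A : U ⊆ Prod.fst '' convexHull ℝ S := by
    intro x hx
    rw [hUdef, Set.mem_iUnion₂] at hx
    obtain ⟨y, hy, hx⟩ := hx
    rw [Finset.mem_range] at hy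
    refine ⟨(x, (y : ℝ)), subset_convexHull ℝ S ?_, rfl⟩
    refine ⟨(y : ℤ), Int.ofNat_nonneg y, by exact_mod_cast Nat.lt_succ_iff.mp hy, by push_cast; rfl, ?_⟩
    simpa using hx
  have hAconv : Convex ℝ (Prod.fst '' convexHull ℝ S : Set (Fin d → ℝ)) :=
    (convex_convexHull ℝ S).linear_image (LinearMap.fst ℝ (Fin d → ℝ) ℝ)
  have hC_sub_A : convexHull ℝ U ⊆ Prod.fst '' convexHull ℝ S :=
    convexHull_min hU_sub_A hAconv
  -- B ⊆ conv U
  have hB_sub_C : B ⊆ convexHull ℝ U := by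
    intro x hx
    rw [hBmem] at hx
    obtain ⟨t, ⟨ht0, htr⟩, z, hz, rfl⟩ := hx
    have h0U : (0 : Fin d → ℝ) ∈ U := by
      rw [hUdef, Set.mem_iUnion₂]
      exact ⟨0, by simp, by simp [dil]⟩
    have hrzU : (r : ℝ) • z ∈ U := by
      rw [hUdef, Set.mem_iUnion₂]
      exact ⟨r, Finset.self_mem_range_succ r, (mem_dil_iff hΛne _).mpr ⟨z, hz, rfl⟩⟩
    have hmem := (convex_convexHull ℝ U) (subset_convexHull ℝ U hrzU)
      (subset_convexHull ℝ U h0U) (a := t / r) (b := 1 - t / r)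
      (by positivity) (by rw [sub_nonneg]; exact div_le_one_of_le₀ htr (le_of_lt hrR))
      (by ring)
    have heq : (t / (r : ℝ)) • ((r : ℝ) • z) + (1 - t / (r : ℝ)) • (0 : Fin d → ℝ) = t • z := by
      rw [smul_smul, smul_zero, add_zero, div_mul_cancel₀]
      exact ne_of_gt hrR
    rwa [heq] at hmem
  exact ⟨subset_antisymm hA_sub_B (hB_sub_C.trans hC_sub_A),
    subset_antisymm (hA_sub_B.trans hB_sub_C) hC_sub_A⟩
end
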